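/- The projection proj preserves total cost: for any x' ∈ ℝ^{R×R}, the vector x = proj(x') satisfies ∑_{(uv)∈A} d_{uv} x_{uv} = ∑_{i,j∈R} d(i,j) x'_{ij}. -/

import Mathlib

/-- The list of consecutive steps (arcs) of a path given as a list of vertices. -/
def walkSteps {V : Type*} (w : List V) : List (V × V) := w.zip w.tail

/-- Total weight of a path. -/
def pathLength {V : Type*} (d : V → V → ℝ) (w : List V) : ℝ :=
  ((walkSteps w).map (fun p => d p.1 p.2)).sum

/-- The shortest-path averaging projection. -/
noncomputable def proj {V : Type*} [DecidableEq V] (R : Finset V)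
    (P : V → V → Finset (List V)) (x' : V → V → ℝ) (u v : V) : ℝ :=
  ∑ i ∈ R, ∑ j ∈ R,
    (((P i j).filter (fun p => (u, v) ∈ walkSteps p)).card : ℝ) * x' i j / ((P i j).card : ℝ)

lemma walkSteps_nodup {V : Type*} {w : List V} (h : w.Nodup) : (walkSteps w).Nodup := by
  have h2 : ((w.zip w.tail).map Prod.snd).Nodup := by
    rw [List.map_snd_zip (l₁ := w) (l₂ := w.tail) (by cases w <;> simp)]
    exact h.tail
  exact h2.of_map _

lemma sum_rotate {α β γ : Type*} (s1 : Finset α) (s2 : Finset β) (s3 : Finset γ)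
    (f : α → β → γ → ℝ) :
    (∑ a ∈ s1, ∑ b ∈ s2, ∑ c ∈ s3, f a b c) = ∑ c ∈ s3, ∑ a ∈ s1, ∑ b ∈ s2, f a b c :=
  calc (∑ a ∈ s1, ∑ b ∈ s2, ∑ c ∈ s3, f a b c)
      = ∑ a ∈ s1, ∑ c ∈ s3, ∑ b ∈ s2, f a b c :=
        Finset.sum_congr rfl fun a _ => Finset.sum_comm
    _ = ∑ c ∈ s3, ∑ a ∈ s1, ∑ b ∈ s2, f a b c := Finset.sum_comm

lemma pathLength_eq {V : Type*} [Fintype V] [DecidableEq V] (d : V → V → ℝ)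
    {p : List V} (h : p.Nodup) :
    pathLength d p = ∑ u, ∑ v, if (u, v) ∈ walkSteps p then d u v else 0 := by
  have h1 : (∑ u, ∑ v, if (u, v) ∈ walkSteps p then d u v else 0)
      = ∑ e ∈ (Finset.univ ×ˢ Finset.univ : Finset (V × V)),
          if e ∈ walkSteps p then d e.1 e.2 else 0 := by
    rw [Finset.sum_product]
  have h2 : (∑ e ∈ (Finset.univ ×ˢ Finset.univ : Finset (V × V)),
        if e ∈ walkSteps p then d e.1 e.2 else 0)
      = ∑ e ∈ (walkSteps p).toFinset, d e.1 e.2 := by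
    simp_rw [← List.mem_toFinset]
    rw [Finset.sum_ite_mem, Finset.univ_product_univ, Finset.univ_inter]
  rw [h1, h2, List.sum_toFinset _ (walkSteps_nodup h)]
  rfl

/-- The projection preserves total cost: `∑_{(uv)} d_{uv} (proj x')_{uv} = ∑_{i,j ∈ R} d(i,j) x'_{ij}`,
where every path in `P i j` has length exactly the shortest-path distance `dist i j`. -/
theorem proj_preserves_cost
    {V : Type*} [Fintype V] [DecidableEq V]
    (R : Finset V) (P : V → V → Finset (List V))
    (d : V → V → ℝ) (dist : V → V → ℝ)
    (hP : ∀ i ∈ R, ∀ j ∈ R, ∀ p ∈ P i j,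
      p.head? = some i ∧ p.getLast? = some j ∧ p.Nodup ∧ pathLength d p = dist i j)
    (hPne : ∀ i ∈ R, ∀ j ∈ R, (P i j).Nonempty)
    (x' : V → V → ℝ) :
    ∑ u, ∑ v, d u v * proj R P x' u v = ∑ i ∈ R, ∑ j ∈ R, dist i j * x' i j := by
  have key : ∀ i ∈ R, ∀ j ∈ R,
      (∑ u, ∑ v, d u v * (((P i j).filter (fun p => (u, v) ∈ walkSteps p)).card : ℝ))
        = ((P i j).card : ℝ) * dist i j := by
    intro i hi j hj
    have h0 : ∀ u v, d u v * (((P i j).filter (fun p => (u, v) ∈ walkSteps p)).card : ℝ)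
        = ∑ p ∈ P i j, (if (u, v) ∈ walkSteps p then d u v else 0) := by
      intro u v
      rw [Finset.card_filter]
      push_cast
      rw [Finset.mul_sum]
      exact Finset.sum_congr rfl fun p _ => by split <;> simp
    simp_rw [h0]
    rw [sum_rotate]
    have h1 : ∀ p ∈ P i j,
        (∑ u, ∑ v, if (u, v) ∈ walkSteps p then d u v else 0) = dist i j := by
      intro p hp
      obtain ⟨_, _, hn, hl⟩ := hP i hi j hj p hp
      rw [← pathLength_eq d hn, hl]
    rw [Finset.sum_congr rfl h1, Finset.sum_const, nsmul_eq_mul]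
  have hcard : ∀ i ∈ R, ∀ j ∈ R, ((P i j).card : ℝ) ≠ 0 := fun i hi j hj => by
    exact_mod_cast Finset.card_ne_zero_of_mem (hPne i hi j hj).choose_spec
  unfold proj
  simp_rw [Finset.mul_sum]
  calc (∑ u, ∑ v, ∑ i ∈ R, ∑ j ∈ R,
        d u v * ((((P i j).filter (fun p => (u, v) ∈ walkSteps p)).card : ℝ)
          * x' i j / ((P i j).card : ℝ)))
      = ∑ i ∈ R, ∑ u, ∑ v, ∑ j ∈ R,
          d u v * ((((P i j).filter (fun p => (u, v) ∈ walkSteps p)).card : ℝ)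
            * x' i j / ((P i j).card : ℝ)) := sum_rotate _ _ _ _
    _ = ∑ i ∈ R, ∑ j ∈ R, ∑ u, ∑ v,
          d u v * ((((P i j).filter (fun p => (u, v) ∈ walkSteps p)).card : ℝ)
            * x' i j / ((P i j).card : ℝ)) :=
        Finset.sum_congr rfl fun i _ => sum_rotate _ _ _ _
    _ = ∑ i ∈ R, ∑ j ∈ R, dist i j * x' i j := by
        refine Finset.sum_congr rfl fun i hi => Finset.sum_congr rfl fun j hj => ?_
        have h2 : ∀ u v, d u v * ((((P i j).filter (fun p => (u, v) ∈ walkSteps p)).card : ℝ)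
              * x' i j / ((P i j).card : ℝ))
            = (d u v * (((P i j).filter (fun p => (u, v) ∈ walkSteps p)).card : ℝ))
              * (x' i j / ((P i j).card : ℝ)) := fun u v => by ring
        simp_rw [h2, ← Finset.sum_mul, key i hi j hj]
        field_simp [hcard i hi j hj]
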